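/- For each λ ∈ (0,1], let g_λ(c) = c·(1 − e^{−(c·Γ(2−λ))^{−1/λ}}), let η(λ) be the unique positive solution of e^x = 1 + x/λ, and let λ* be the unique root in (0,1] of 1 − (1 + Γ(2−λ)^{−1/λ}/λ)·e^{−Γ(2−λ)^{−1/λ}} = 0. If 0 < λ ≤ λ*, then sup_{c∈[0,1]} g_λ(c) = sup_{c≥0} g_λ(c) = η(λ)^{1−λ}/(Γ(2−λ)·(λ + η(λ))). If λ* ≤ λ ≤ 1, then sup_{c∈[0,1]} g_λ(c) = g_λ(1) = 1 − e^{−Γ(2−λ)^{−1/λ}}. -/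

import Mathlib

open Real Set

/-- `g_λ(c) = c·(1 − e^{−(c·Γ(2−λ))^{−1/λ}})`. -/
noncomputable def gLam (lam : ℝ) (c : ℝ) : ℝ :=
  c * (1 - Real.exp (-((c * Real.Gamma (2 - lam)) ^ (-(1 : ℝ) / lam))))

/-- `ξ(λ) = 1 − (1 + Γ(2−λ)^{−1/λ}/λ)·e^{−Γ(2−λ)^{−1/λ}}`. -/
noncomputable def xi (lam : ℝ) : ℝ :=
  1 - (1 + Real.Gamma (2 - lam) ^ (-(1 : ℝ) / lam) / lam) *
        Real.exp (-(Real.Gamma (2 - lam) ^ (-(1 : ℝ) / lam)))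

lemma Gam_pos {lam : ℝ} (h : lam ≤ 1) : 0 < Real.Gamma (2 - lam) :=
  Real.Gamma_pos_of_pos (by linarith)

lemma Gam_le_one {lam : ℝ} (h0 : 0 ≤ lam) (h1 : lam ≤ 1) : Real.Gamma (2 - lam) ≤ 1 := by
  have := Real.convexOn_Gamma.2 (mem_Ioi.mpr one_pos) (mem_Ioi.mpr two_pos) h0
    (by linarith : (0:ℝ) ≤ 1 - lam) (by ring)
  have h2 : lam • (1:ℝ) + (1-lam) • (2:ℝ) = 2 - lam := by simp [smul_eq_mul]; ring
  rw [h2] at this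
  rw [Real.Gamma_one, Real.Gamma_two, smul_eq_mul, smul_eq_mul] at this
  linarith

lemma Gam_three : Real.Gamma 3 = 2 := by
  have := Real.Gamma_nat_eq_factorial 2
  norm_num at this
  convert this using 2
  norm_num

lemma one_sub_le_Gam {lam : ℝ} (h0 : 0 ≤ lam) (h1 : lam ≤ 1) :
    1 - lam ≤ Real.Gamma (2 - lam) := by
  have hmem1 : (2 - lam) ∈ Ioi (0:ℝ) := by simp; linarith
  have hmem2 : (3:ℝ) ∈ Ioi (0:ℝ) := by norm_num
  have ha : (0:ℝ) ≤ 1/(1+lam) := by positivity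
  have hb : (0:ℝ) ≤ lam/(1+lam) := by positivity
  have hab : 1/(1+lam) + lam/(1+lam) = 1 := by field_simp
  have := Real.convexOn_Gamma.2 hmem1 hmem2 ha hb hab
  have h2 : (1/(1+lam)) • (2 - lam) + (lam/(1+lam)) • (3:ℝ) = 2 := by
    simp [smul_eq_mul]; field_simp; ring
  rw [h2, Real.Gamma_two, Gam_three] at this
  have hpos : (0:ℝ) < 1 + lam := by linarith
  simp only [smul_eq_mul] at this
  rw [div_mul_eq_mul_div, div_mul_eq_mul_div, ← add_div, le_div_iff₀ hpos] at this
  linarith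

lemma exp_eight_lt : Real.exp 8 < 4000 := by
  have h := Real.exp_one_lt_d9
  calc Real.exp 8 = (Real.exp 1)^(8:ℕ) := by
        rw [← Real.exp_nat_mul]; norm_num
    _ < 2.7182818286^(8:ℕ) := by
        apply pow_lt_pow_left₀ h (le_of_lt (Real.exp_pos 1))
        norm_num
    _ < 4000 := by norm_num

lemma xi_neg_small {lam : ℝ} (h0 : 0 < lam) (h1 : lam ≤ 1/4000) : xi lam < 0 := by
  have h1' : lam ≤ 1 := by linarith
  set G := Real.Gamma (2 - lam) ^ (-(1 : ℝ) / lam) with hG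
  have hGam := Gam_pos h1'
  have hexp : (-(1:ℝ)/lam) ≤ 0 := by
    rw [neg_div, neg_nonpos]; positivity
  have hG1 : 1 ≤ G := Real.one_le_rpow_of_pos_of_le_one_of_nonpos hGam
    (Gam_le_one h0.le h1') hexp
  -- upper bound G ≤ exp 2 ≤ 8
  have hsub : (0:ℝ) < 1 - lam := by linarith
  have hle : G ≤ (1 - lam) ^ (-(1:ℝ)/lam) :=
    Real.rpow_le_rpow_of_nonpos hsub (one_sub_le_Gam h0.le h1') hexp
  have hrw : (1 - lam) ^ (-(1:ℝ)/lam) = Real.exp ((-(1:ℝ)/lam) * Real.log (1-lam)) := by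
    rw [Real.rpow_def_of_pos hsub]; ring_nf
  have hlog : -Real.log (1 - lam) ≤ lam / (1 - lam) := by
    have := Real.log_le_sub_one_of_pos (x := (1-lam)⁻¹) (by positivity)
    rw [Real.log_inv] at this
    have : -Real.log (1-lam) ≤ (1-lam)⁻¹ - 1 := this
    have heq : (1-lam)⁻¹ - 1 = lam / (1-lam) := by field_simp; ring
    linarith [heq ▸ this]
  have hexpbd : (-(1:ℝ)/lam) * Real.log (1-lam) ≤ 2 := by
    have h2 : (-(1:ℝ)/lam) * Real.log (1-lam) = (1/lam) * (-Real.log (1-lam)) := by ring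
    rw [h2]
    have h3 : (1/lam) * (-Real.log (1-lam)) ≤ (1/lam) * (lam/(1-lam)) := by
      apply mul_le_mul_of_nonneg_left hlog (by positivity)
    have h4 : (1/lam) * (lam/(1-lam)) = 1/(1-lam) := by field_simp
    have h5 : 1/(1-lam) ≤ 2 := by
      rw [div_le_iff₀ hsub]; linarith
    linarith
  have hG8 : G ≤ 8 := by
    have : G ≤ Real.exp 2 := by
      rw [hrw] at hle
      exact hle.trans (Real.exp_le_exp.mpr hexpbd)
    have he2 : Real.exp 2 ≤ 8 := by
      have h := Real.exp_one_lt_d9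
      calc Real.exp 2 = (Real.exp 1)^(2:ℕ) := by rw [← Real.exp_nat_mul]; norm_num
        _ ≤ 2.7182818286^(2:ℕ) := by
            apply pow_le_pow_left₀ (le_of_lt (Real.exp_pos 1)) h.le
        _ ≤ 8 := by norm_num
    linarith
  -- now the estimate
  have hkey : (1:ℝ) < (1 + G/lam) * Real.exp (-G) := by
    have h1l : (4000:ℝ) ≤ 1/lam := by
      rw [le_div_iff₀ h0]; linarith
    have hGl : (4000:ℝ) ≤ G/lam := by
      calc (4000:ℝ) ≤ 1/lam := h1l
        _ ≤ G/lam := by gcongr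
    have he8 : Real.exp (-G) ≥ Real.exp (-8 : ℝ) := Real.exp_le_exp.mpr (by linarith)
    have hbig : (4000:ℝ) * Real.exp (-8:ℝ) ≤ (G/lam) * Real.exp (-G) := by
      apply mul_le_mul hGl he8 (Real.exp_pos _).le (by positivity)
    have h4000 : (1:ℝ) < 4000 * Real.exp (-8:ℝ) := by
      rw [Real.exp_neg, ← div_eq_mul_inv, lt_div_iff₀ (Real.exp_pos _), one_mul]
      exact exp_eight_lt
    nlinarith [Real.exp_pos (-G), (Real.exp_pos (-G)).le]
  unfold xi
  rw [← hG]
  linarith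

lemma xi_one_pos : 0 < xi 1 := by
  unfold xi
  norm_num [Real.Gamma_one]
  rw [Real.exp_neg, ← div_eq_mul_inv, div_lt_iff₀ (Real.exp_pos _), one_mul]
  calc (2:ℝ) < 2.7182818283 := by norm_num
    _ < Real.exp 1 := Real.exp_one_gt_d9

lemma xi_contAt {l : ℝ} (hl0 : 0 < l) (hl1 : l ≤ 1) : ContinuousAt xi l := by
  have hGpos : 0 < Real.Gamma (2 - l) := Real.Gamma_pos_of_pos (by linarith)
  have hGam : ContinuousAt (fun l : ℝ => Real.Gamma (2 - l)) l := by
    have hd : DifferentiableAt ℝ Real.Gamma (2 - l) := by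
      apply Real.differentiableAt_Gamma
      intro m
      have : (0:ℝ) < 2 - l := by linarith
      have hm : -(m:ℝ) ≤ 0 := neg_nonpos.mpr (Nat.cast_nonneg m)
      linarith
    exact hd.continuousAt.comp ((continuousAt_const).sub continuousAt_id)
  have hG : ContinuousAt (fun l : ℝ => Real.Gamma (2 - l) ^ (-(1:ℝ)/l)) l := by
    apply ContinuousAt.rpow hGam
    · exact (continuousAt_const).div continuousAt_id hl0.ne'
    · exact Or.inl hGpos.ne'
  unfold xi
  exact continuousAt_const.sub (((continuousAt_const.add
    (hG.div continuousAt_id hl0.ne')).mul (Real.continuous_exp.continuousAt.comp hG.neg)))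

lemma xi_sign {lam lamstar : ℝ} (hlam : lam ∈ Ioc (0:ℝ) 1) (hls : lamstar ∈ Ioc (0:ℝ) 1)
    (hls0 : xi lamstar = 0)
    (hlsu : ∀ l ∈ Ioc (0:ℝ) 1, xi l = 0 → l = lamstar) :
    (lam ≤ lamstar → xi lam ≤ 0) ∧ (lamstar ≤ lam → 0 ≤ xi lam) := by
  obtain ⟨hl0, hl1⟩ := hlam
  obtain ⟨hs0, hs1⟩ := hls
  have hcont : ∀ a b : ℝ, 0 < a → b ≤ 1 → ContinuousOn xi (Icc a b) := by
    intro a b ha hb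
    intro x hx
    exact (xi_contAt (lt_of_lt_of_le ha hx.1) (le_trans hx.2 hb)).continuousWithinAt
  constructor
  · intro hle
    rcases eq_or_lt_of_le hle with h | hlt
    · rw [h, hls0]
    by_contra hpos
    push_neg at hpos
    -- xi lam > 0; find root between
    have h4 : (1:ℝ)/4000 < lam := by
      by_contra hsm
      push_neg at hsm
      linarith [xi_neg_small hl0 hsm]
    have hneg : xi (1/4000) < 0 := xi_neg_small (by norm_num) le_rfl
    have := intermediate_value_Ioo (a := (1:ℝ)/4000) (b := lam) (by linarith)
      (hcont _ _ (by norm_num) hl1)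
    have hmem : (0:ℝ) ∈ Ioo (xi (1/4000)) (xi lam) := ⟨hneg, hpos⟩
    obtain ⟨r, hr, hr0⟩ := this hmem
    have := hlsu r ⟨by linarith [hr.1], by linarith [hr.2]⟩ hr0
    linarith [hr.2, this ▸ hr.2]
  · intro hle
    rcases eq_or_lt_of_le hle with h | hlt
    · rw [← h, hls0]
    by_contra hneg
    push_neg at hneg
    have hl1' : lam < 1 := by
      rcases eq_or_lt_of_le hl1 with h | h
      · exfalso; rw [h] at hneg; linarith [xi_one_pos]
      · exact h
    have := intermediate_value_Ioo (a := lam) (b := 1) hl1'.le (hcont _ _ hl0 le_rfl)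
    have hmem : (0:ℝ) ∈ Ioo (xi lam) (xi 1) := ⟨hneg, xi_one_pos⟩
    obtain ⟨r, hr, hr0⟩ := this hmem
    have := hlsu r ⟨by linarith [hr.1], by linarith [hr.2]⟩ hr0
    linarith [hr.1, this ▸ hr.1]

noncomputable def Ffun (lam : ℝ) (u : ℝ) : ℝ := u ^ (-lam) * (1 - Real.exp (-u))

-- strict convexity consequences
lemma exp_lt_A1 {lam eta : ℝ} (heta_pos : 0 < eta) (heta : Real.exp eta = 1 + eta / lam)
    (u : ℝ) (hu0 : 0 < u) (hue : u < eta) :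
    Real.exp u < 1 + u / lam := by
  have hne : (0:ℝ) ≠ eta := heta_pos.ne
  have ht0 : 0 < 1 - u/eta := by
    rw [sub_pos, div_lt_one heta_pos]; exact hue
  have ht1 : 0 < u/eta := div_pos hu0 heta_pos
  have hc := strictConvexOn_exp.2 (mem_univ (0:ℝ)) (mem_univ eta) hne ht0 ht1 (by ring)
  simp only [smul_eq_mul, mul_zero, zero_add, Real.exp_zero, mul_one] at hc
  rw [div_mul_cancel₀ _ heta_pos.ne', heta] at hc
  calc Real.exp u < 1 - u/eta + u/eta * (1 + eta/lam) := hc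
    _ = 1 + u/lam := by field_simp; ring

lemma exp_gt_A2 {lam eta : ℝ} (heta_pos : 0 < eta) (heta : Real.exp eta = 1 + eta / lam)
    (u : ℝ) (hue : eta < u) : 1 + u / lam < Real.exp u := by
  have hu0 : 0 < u := heta_pos.trans hue
  have hne : (0:ℝ) ≠ u := hu0.ne
  have hs1 : 0 < eta/u := div_pos heta_pos hu0
  have hs0 : 0 < 1 - eta/u := by rw [sub_pos, div_lt_one hu0]; exact hue
  have hc := strictConvexOn_exp.2 (mem_univ (0:ℝ)) (mem_univ u) hne hs0 hs1 (by ring)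
  simp only [smul_eq_mul, mul_zero, zero_add, Real.exp_zero, mul_one] at hc
  rw [div_mul_cancel₀ _ hu0.ne', heta] at hc
  -- 1 + eta/lam < 1 - eta/u + eta/u * exp u
  have h1 : eta/lam + eta/u < (eta/u) * Real.exp u := by linarith
  have h2 : eta * (1 + u/lam) < eta * Real.exp u := by
    have := mul_lt_mul_of_pos_left h1 hu0
    calc eta * (1 + u/lam) = u * (eta/lam + eta/u) := by field_simp; ring
      _ < u * ((eta/u) * Real.exp u) := mul_lt_mul_of_pos_left h1 hu0
      _ = eta * Real.exp u := by field_simp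
  exact lt_of_mul_lt_mul_left h2 heta_pos.le

lemma hasDerivAt_F {lam u : ℝ} (hu : 0 < u) :
    HasDerivAt (Ffun lam) (u ^ (-lam - 1) * Real.exp (-u) * (u - lam * (Real.exp u - 1))) u := by
  have h1 : HasDerivAt (fun x : ℝ => x ^ (-lam)) ((-lam) * u ^ (-lam - 1)) u :=
    Real.hasDerivAt_rpow_const (Or.inl hu.ne')
  have h2e : HasDerivAt (fun x : ℝ => Real.exp (-x)) (Real.exp (-u) * (-1)) u :=
    (Real.hasDerivAt_exp (-u)).comp u (hasDerivAt_neg u)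
  have h2 : HasDerivAt (fun x : ℝ => 1 - Real.exp (-x)) (Real.exp (-u)) u := by
    simpa using HasDerivAt.const_sub (1:ℝ) h2e
  have := h1.mul h2
  refine this.congr_deriv ?_
  have hA : u ^ (-lam) = u ^ (-lam - 1) * u := by
    rw [← Real.rpow_add_one hu.ne' (-lam - 1)]; ring_nf
  have hEX : Real.exp (-u) * Real.exp u = 1 := by rw [← Real.exp_add]; simp
  rw [hA]
  linear_combination (lam * u ^ (-lam - 1)) * hEX

lemma F_contAt {lam u : ℝ} (hu : 0 < u) : ContinuousAt (Ffun lam) u :=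
  (hasDerivAt_F hu).differentiableAt.continuousAt

lemma F_mono {lam eta : ℝ} (hl0 : 0 < lam) (heta_pos : 0 < eta)
    (heta : Real.exp eta = 1 + eta / lam) :
    StrictMonoOn (Ffun lam) (Ioc 0 eta) := by
  apply strictMonoOn_of_deriv_pos (convex_Ioc 0 eta)
  · intro x hx
    exact (F_contAt hx.1).continuousWithinAt
  · rw [interior_Ioc]
    intro x hx
    rw [(hasDerivAt_F hx.1).deriv]
    have hA1 := exp_lt_A1 heta_pos heta x hx.1 hx.2
    have hfac : 0 < x - lam * (Real.exp x - 1) := by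
      have : lam * (Real.exp x - 1) < lam * (x / lam) :=
        mul_lt_mul_of_pos_left (by linarith) hl0
      rw [mul_div_cancel₀ _ hl0.ne'] at this
      linarith
    have h1 : (0:ℝ) < x ^ (-lam - 1) := Real.rpow_pos_of_pos hx.1 _
    positivity

lemma F_anti {lam eta : ℝ} (hl0 : 0 < lam) (heta_pos : 0 < eta)
    (heta : Real.exp eta = 1 + eta / lam) :
    StrictAntiOn (Ffun lam) (Ici eta) := by
  apply strictAntiOn_of_deriv_neg (convex_Ici eta)
  · intro x hx
    exact (F_contAt (lt_of_lt_of_le heta_pos hx)).continuousWithinAt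
  · rw [interior_Ici]
    intro x hx
    have hx0 : 0 < x := heta_pos.trans hx
    rw [(hasDerivAt_F hx0).deriv]
    have hA2 := exp_gt_A2 heta_pos heta x hx
    have hfac : x - lam * (Real.exp x - 1) < 0 := by
      have : lam * (x / lam) < lam * (Real.exp x - 1) :=
        mul_lt_mul_of_pos_left (by linarith) hl0
      rw [mul_div_cancel₀ _ hl0.ne'] at this
      linarith
    have h1 : (0:ℝ) < x ^ (-lam - 1) := Real.rpow_pos_of_pos hx0 _
    have h2 : (0:ℝ) < Real.exp (-x) := Real.exp_pos _
    have h3 : 0 < x ^ (-lam - 1) * Real.exp (-x) := mul_pos h1 h2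
    exact mul_neg_of_pos_of_neg h3 hfac

lemma F_le_max {lam eta : ℝ} (hl0 : 0 < lam) (heta_pos : 0 < eta)
    (heta : Real.exp eta = 1 + eta / lam) {u : ℝ} (hu : 0 < u) :
    Ffun lam u ≤ Ffun lam eta := by
  rcases le_total u eta with h | h
  · exact (F_mono hl0 heta_pos heta).monotoneOn ⟨hu, h⟩ ⟨heta_pos, le_rfl⟩ h
  · exact (F_anti hl0 heta_pos heta).antitoneOn (self_mem_Ici) h h

lemma gLam_eq_F {lam c : ℝ} (hl0 : 0 < lam) (hl1 : lam ≤ 1) (hc : 0 < c) :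
    gLam lam c = Ffun lam ((c * Real.Gamma (2 - lam)) ^ (-(1:ℝ)/lam)) / Real.Gamma (2 - lam) := by
  have hG : 0 < Real.Gamma (2 - lam) := Real.Gamma_pos_of_pos (by linarith)
  have hcG : 0 < c * Real.Gamma (2 - lam) := mul_pos hc hG
  set u : ℝ := (c * Real.Gamma (2 - lam)) ^ (-(1:ℝ)/lam) with hu
  have h1 : u ^ (-lam) = c * Real.Gamma (2 - lam) := by
    rw [hu, ← Real.rpow_mul hcG.le]
    rw [show (-(1:ℝ)/lam) * (-lam) = 1 by field_simp, Real.rpow_one]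
  unfold gLam Ffun
  rw [← hu, h1]
  field_simp

lemma gLam_nonneg {lam c : ℝ} (hl0 : 0 < lam) (hl1 : lam ≤ 1) (hc : 0 ≤ c) :
    0 ≤ gLam lam c := by
  have hG : 0 < Real.Gamma (2 - lam) := Real.Gamma_pos_of_pos (by linarith)
  have h1 : 0 ≤ (c * Real.Gamma (2 - lam)) ^ (-(1:ℝ)/lam) :=
    Real.rpow_nonneg (by positivity) _
  have h2 : Real.exp (-((c * Real.Gamma (2 - lam)) ^ (-(1:ℝ)/lam))) ≤ 1 :=
    Real.exp_le_one_iff.mpr (by linarith)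
  unfold gLam
  have : 0 ≤ 1 - Real.exp (-((c * Real.Gamma (2 - lam)) ^ (-(1:ℝ)/lam))) := by linarith
  positivity

lemma u_cstar {lam eta : ℝ} (hl0 : 0 < lam) (hl1 : lam ≤ 1) (heta_pos : 0 < eta) :
    ((eta ^ (-lam) / Real.Gamma (2 - lam)) * Real.Gamma (2 - lam)) ^ (-(1:ℝ)/lam) = eta := by
  have hG : 0 < Real.Gamma (2 - lam) := Real.Gamma_pos_of_pos (by linarith)
  rw [div_mul_cancel₀ _ hG.ne', ← Real.rpow_mul heta_pos.le]
  rw [show (-lam) * (-(1:ℝ)/lam) = 1 by field_simp, Real.rpow_one]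

lemma gLam_cstar_val {lam eta : ℝ} (hl0 : 0 < lam) (hl1 : lam ≤ 1) (heta_pos : 0 < eta)
    (heta : Real.exp eta = 1 + eta / lam) :
    gLam lam (eta ^ (-lam) / Real.Gamma (2 - lam)) =
      eta ^ (1 - lam) / (Real.Gamma (2 - lam) * (lam + eta)) := by
  have hG : 0 < Real.Gamma (2 - lam) := Real.Gamma_pos_of_pos (by linarith)
  unfold gLam
  rw [u_cstar hl0 hl1 heta_pos]
  have hexp : Real.exp (-eta) = lam / (lam + eta) := by
    rw [Real.exp_neg, heta]
    rw [show (1 : ℝ) + eta/lam = (lam + eta)/lam by field_simp]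
    rw [inv_div]
  rw [hexp]
  have h1 : (1:ℝ) - lam / (lam + eta) = eta / (lam + eta) := by
    field_simp; ring
  rw [h1]
  have h2 : eta ^ (1 - lam) = eta ^ (-lam) * eta := by
    rw [← Real.rpow_add_one heta_pos.ne' (-lam)]; ring_nf
  rw [h2]
  field_simp

-- bridging: sign of xi vs u1 and eta
lemma u1_le_eta {lam eta : ℝ} (hl0 : 0 < lam) (hl1 : lam ≤ 1) (heta_pos : 0 < eta)
    (heta : Real.exp eta = 1 + eta / lam) (hxi : xi lam ≤ 0) :
    Real.Gamma (2 - lam) ^ (-(1:ℝ)/lam) ≤ eta := by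
  have hG : 0 < Real.Gamma (2 - lam) := Real.Gamma_pos_of_pos (by linarith)
  set u1 : ℝ := Real.Gamma (2 - lam) ^ (-(1:ℝ)/lam) with hu1
  have hu1pos : 0 < u1 := Real.rpow_pos_of_pos hG _
  have hEX : Real.exp (-u1) * Real.exp u1 = 1 := by rw [← Real.exp_add]; simp
  have hkey : Real.exp u1 ≤ 1 + u1 / lam := by
    unfold xi at hxi
    rw [← hu1] at hxi
    nlinarith [Real.exp_pos u1, Real.exp_pos (-u1)]
  by_contra hgt
  push_neg at hgt
  linarith [exp_gt_A2 heta_pos heta u1 hgt]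

lemma eta_le_u1 {lam eta : ℝ} (hl0 : 0 < lam) (hl1 : lam ≤ 1) (heta_pos : 0 < eta)
    (heta : Real.exp eta = 1 + eta / lam) (hxi : 0 ≤ xi lam) :
    eta ≤ Real.Gamma (2 - lam) ^ (-(1:ℝ)/lam) := by
  have hG : 0 < Real.Gamma (2 - lam) := Real.Gamma_pos_of_pos (by linarith)
  set u1 : ℝ := Real.Gamma (2 - lam) ^ (-(1:ℝ)/lam) with hu1
  have hu1pos : 0 < u1 := Real.rpow_pos_of_pos hG _
  have hEX : Real.exp (-u1) * Real.exp u1 = 1 := by rw [← Real.exp_add]; simp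
  have hkey : 1 + u1 / lam ≤ Real.exp u1 := by
    unfold xi at hxi
    rw [← hu1] at hxi
    nlinarith [Real.exp_pos u1, Real.exp_pos (-u1)]
  by_contra hgt
  push_neg at hgt
  linarith [exp_lt_A1 heta_pos heta u1 hu1pos hgt]

-- Case 1: greatest at cstar
lemma case1_greatest {lam eta : ℝ} (hl0 : 0 < lam) (hl1 : lam ≤ 1) (heta_pos : 0 < eta)
    (heta : Real.exp eta = 1 + eta / lam) (hxi : xi lam ≤ 0) :
    IsGreatest (gLam lam '' Icc (0:ℝ) 1) (gLam lam (eta ^ (-lam) / Real.Gamma (2 - lam))) ∧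
    IsGreatest (gLam lam '' Ici (0:ℝ)) (gLam lam (eta ^ (-lam) / Real.Gamma (2 - lam))) := by
  have hG : 0 < Real.Gamma (2 - lam) := Real.Gamma_pos_of_pos (by linarith)
  set cstar : ℝ := eta ^ (-lam) / Real.Gamma (2 - lam) with hcs
  have hcspos : 0 < cstar := div_pos (Real.rpow_pos_of_pos heta_pos _) hG
  have hcsle : cstar ≤ 1 := by
    -- eta^(-lam) ≤ Gamma: from u1 ≤ eta
    have hu1 := u1_le_eta hl0 hl1 heta_pos heta hxi
    have h2 : eta ^ (-lam) ≤ (Real.Gamma (2 - lam) ^ (-(1:ℝ)/lam)) ^ (-lam) :=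
      Real.rpow_le_rpow_of_nonpos (Real.rpow_pos_of_pos hG _) hu1 (by simp [hl0.le])
    have h3 : (Real.Gamma (2 - lam) ^ (-(1:ℝ)/lam)) ^ (-lam) = Real.Gamma (2 - lam) := by
      rw [← Real.rpow_mul hG.le, show (-(1:ℝ)/lam) * (-lam) = 1 by field_simp, Real.rpow_one]
    rw [h3] at h2
    rw [hcs, div_le_one hG]
    exact h2
  have hub : ∀ c : ℝ, 0 ≤ c → gLam lam c ≤ gLam lam cstar := by
    intro c hc
    rcases eq_or_lt_of_le hc with h | h
    · rw [← h]
      show gLam lam 0 ≤ _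
      unfold gLam
      rw [zero_mul]
      exact gLam_nonneg hl0 hl1 hcspos.le
    · rw [gLam_eq_F hl0 hl1 h, gLam_eq_F hl0 hl1 hcspos, hcs, u_cstar hl0 hl1 heta_pos]
      gcongr
      exact F_le_max hl0 heta_pos heta (Real.rpow_pos_of_pos (mul_pos h hG) _)
  have hmem1 : cstar ∈ Icc (0:ℝ) 1 := ⟨hcspos.le, hcsle⟩
  exact ⟨⟨mem_image_of_mem _ hmem1, by rintro x ⟨c, hc, rfl⟩; exact hub c hc.1⟩,
    ⟨mem_image_of_mem _ hcspos.le, by rintro x ⟨c, hc, rfl⟩; exact hub c hc⟩⟩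


lemma case2_greatest {lam eta : ℝ} (hl0 : 0 < lam) (hl1 : lam ≤ 1) (heta_pos : 0 < eta)
    (heta : Real.exp eta = 1 + eta / lam) (hxi : 0 ≤ xi lam) :
    IsGreatest (gLam lam '' Icc (0:ℝ) 1) (gLam lam 1) := by
  have hG : 0 < Real.Gamma (2 - lam) := Real.Gamma_pos_of_pos (by linarith)
  have heta_u1 := eta_le_u1 hl0 hl1 heta_pos heta hxi
  have hub : ∀ c ∈ Icc (0:ℝ) 1, gLam lam c ≤ gLam lam 1 := by
    rintro c ⟨hc0, hc1⟩
    rcases eq_or_lt_of_le hc0 with h | h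
    · rw [← h]
      show gLam lam 0 ≤ _
      unfold gLam
      rw [zero_mul]
      exact gLam_nonneg hl0 hl1 zero_le_one
    · rw [gLam_eq_F hl0 hl1 h, gLam_eq_F hl0 hl1 one_pos]
      gcongr
      have hcG : 0 < c * Real.Gamma (2 - lam) := mul_pos h hG
      have hle : c * Real.Gamma (2 - lam) ≤ 1 * Real.Gamma (2 - lam) := by
        rw [one_mul]; nlinarith
      have huc : (1 * Real.Gamma (2 - lam)) ^ (-(1:ℝ)/lam) ≤
          (c * Real.Gamma (2 - lam)) ^ (-(1:ℝ)/lam) :=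
        Real.rpow_le_rpow_of_nonpos hcG hle (by
          rw [neg_div, neg_nonpos]; positivity)
      have hu1eta : eta ≤ (1 * Real.Gamma (2 - lam)) ^ (-(1:ℝ)/lam) := by
        rwa [one_mul]
      exact (F_anti hl0 heta_pos heta).antitoneOn (mem_Ici.mpr hu1eta)
        (mem_Ici.mpr (hu1eta.trans huc)) huc
  exact ⟨mem_image_of_mem _ ⟨zero_le_one, le_rfl⟩, by rintro x ⟨c, hc, rfl⟩; exact hub c hc⟩

/-- Characterization of `sup_{c ∈ [0,1]} g_λ(c)`: if `0 < λ ≤ λ*`, it equals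
`sup_{c ≥ 0} g_λ(c) = η(λ)^{1−λ}/(Γ(2−λ)·(λ + η(λ)))`, where `η(λ)` is the unique
positive solution of `e^x = 1 + x/λ`; if `λ* ≤ λ ≤ 1`, it equals
`g_λ(1) = 1 − e^{−Γ(2−λ)^{−1/λ}}`.  Here `λ*` is the unique root of `ξ` in `(0,1]`. -/
theorem sup_gLam (lam : ℝ) (hlam : lam ∈ Set.Ioc (0 : ℝ) 1)
    (lamstar : ℝ) (hls : lamstar ∈ Set.Ioc (0 : ℝ) 1) (hls0 : xi lamstar = 0)
    (hlsu : ∀ l ∈ Set.Ioc (0 : ℝ) 1, xi l = 0 → l = lamstar)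
    (eta : ℝ) (heta_pos : 0 < eta) (heta : Real.exp eta = 1 + eta / lam)
    (hetau : ∀ y : ℝ, 0 < y → Real.exp y = 1 + y / lam → y = eta) :
    (lam ≤ lamstar →
      sSup (gLam lam '' Set.Icc (0 : ℝ) 1) = sSup (gLam lam '' Set.Ici (0 : ℝ)) ∧
      sSup (gLam lam '' Set.Icc (0 : ℝ) 1) =
        eta ^ (1 - lam) / (Real.Gamma (2 - lam) * (lam + eta))) ∧
    (lamstar ≤ lam →
      sSup (gLam lam '' Set.Icc (0 : ℝ) 1) = gLam lam 1 ∧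
      sSup (gLam lam '' Set.Icc (0 : ℝ) 1) =
        1 - Real.exp (-(Real.Gamma (2 - lam) ^ (-(1 : ℝ) / lam)))) := by
  obtain ⟨hl0, hl1⟩ := hlam
  have hsign := xi_sign ⟨hl0, hl1⟩ hls hls0 hlsu
  constructor
  · intro hle
    have hxi : xi lam ≤ 0 := hsign.1 hle
    obtain ⟨hg1, hg2⟩ := case1_greatest hl0 hl1 heta_pos heta hxi
    have e1 := hg1.csSup_eq
    have e2 := hg2.csSup_eq
    exact ⟨by rw [e1, e2], by rw [e1, gLam_cstar_val hl0 hl1 heta_pos heta]⟩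
  · intro hle
    have hxi : 0 ≤ xi lam := hsign.2 hle
    have e1 := (case2_greatest hl0 hl1 heta_pos heta hxi).csSup_eq
    refine ⟨e1, ?_⟩
    rw [e1]
    unfold gLam
    rw [one_mul, one_mul]
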